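/- arXiv:1110.4703 — 4 statements merged into one kernel-verified Lean document; each statement's English description precedes it below -/
import Mathlib

section
/- For a Poisson random variable Q with mean C^γ (0<γ<1), the limit as C→∞ of -(log P(Q > C))/(C log C) equals 1 - γ. -/
open Filter Real

noncomputable def poisP (l : ℝ) (k : ℕ) : ℝ := Real.exp (-l) * l ^ k / (Nat.factorial k)

noncomputable def poissonTail (l : ℝ) (a : ℝ) : ℝ :=
  ∑' k : ℕ, if a < (k : ℝ) then poisP l k else 0

lemma poisP_nonneg {l : ℝ} (hl : 0 ≤ l) (k : ℕ) : 0 ≤ poisP l k := by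
  unfold poisP; positivity

lemma poisP_pos {l : ℝ} (hl : 0 < l) (k : ℕ) : 0 < poisP l k := by
  unfold poisP
  have h : (0:ℝ) < Nat.factorial k := by positivity
  positivity

lemma summable_poisP (l : ℝ) : Summable (fun k => poisP l k) := by
  have h := (Real.summable_pow_div_factorial l).mul_left (Real.exp (-l))
  refine h.congr fun k => ?_
  unfold poisP; ring

lemma poisP_succ (l : ℝ) (k : ℕ) : poisP l (k+1) = poisP l k * (l / (k+1)) := by
  unfold poisP
  have h : (Nat.factorial k : ℝ) ≠ 0 := by positivity
  rw [Nat.factorial_succ]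
  field_simp
  push_cast
  ring

lemma summable_tailfn {l : ℝ} (hl : 0 ≤ l) (C : ℕ) :
    Summable (fun k : ℕ => if (C : ℝ) < (k : ℝ) then poisP l k else 0) := by
  refine Summable.of_nonneg_of_le (fun k => ?_) (fun k => ?_) (summable_poisP l)
  · split <;> simp [poisP_nonneg hl]
  · split
    · exact le_rfl
    · exact poisP_nonneg hl k

lemma tail_eq {l : ℝ} (hl : 0 ≤ l) (C : ℕ) :
    poissonTail l C = ∑' j : ℕ, poisP l (j + (C+1)) := by
  unfold poissonTail
  have hs := summable_tailfn hl C
  have h := hs.sum_add_tsum_nat_add (C+1)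
  have h0 : ∑ i ∈ Finset.range (C+1), (if (C : ℝ) < (i : ℝ) then poisP l i else 0) = 0 := by
    refine Finset.sum_eq_zero fun i hi => ?_
    rw [if_neg]
    rw [Finset.mem_range] at hi
    push_cast
    exact_mod_cast not_lt.2 (by exact_mod_cast Nat.lt_succ_iff.1 hi)
  rw [h0, zero_add] at h
  rw [← h]
  refine tsum_congr fun j => ?_
  rw [if_pos]
  push_cast
  linarith [Nat.cast_nonneg (α := ℝ) j]

lemma term_le {l : ℝ} (hl : 0 ≤ l) (C j : ℕ) :
    poisP l (j + (C+1)) ≤ poisP l (C+1) * (l/(C+1))^j := by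
  induction j with
  | zero => simp
  | succ n ih =>
    have h1 : (n + 1 + (C+1)) = (n + (C+1)) + 1 := by omega
    rw [h1, poisP_succ]
    have hr : l / ((n + (C+1) : ℕ) + 1 : ℝ) ≤ l / (C+1) := by
      refine div_le_div_of_nonneg_left hl (by positivity) ?_
      push_cast; linarith [Nat.cast_nonneg (α := ℝ) n]
    calc poisP l (n + (C+1)) * (l / ((n + (C+1) : ℕ) + 1 : ℝ))
        ≤ (poisP l (C+1) * (l/(C+1))^n) * (l / (C+1)) := by
          exact mul_le_mul ih hr (div_nonneg hl (by positivity))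
            (mul_nonneg (poisP_nonneg hl _) (pow_nonneg (div_nonneg hl (by positivity)) n))
      _ = poisP l (C+1) * (l/(C+1))^(n+1) := by ring

lemma tail_le {l : ℝ} (hl : 0 ≤ l) (C : ℕ) (hr : l / (C+1) < 1) :
    poissonTail l C ≤ poisP l (C+1) * (1 - l/(C+1))⁻¹ := by
  rw [tail_eq hl C]
  have hr0 : 0 ≤ l / (C+1) := by positivity
  have hsum1 : Summable (fun j : ℕ => poisP l (j + (C+1))) :=
    (summable_nat_add_iff (C+1)).2 (summable_poisP l)
  have hsum2 : Summable (fun j : ℕ => poisP l (C+1) * (l/(C+1))^j) :=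
    (summable_geometric_of_lt_one hr0 hr).mul_left _
  calc (∑' j : ℕ, poisP l (j + (C+1))) ≤ ∑' j : ℕ, poisP l (C+1) * (l/(C+1))^j :=
        Summable.tsum_le_tsum (fun j => term_le hl C j) hsum1 hsum2
    _ = poisP l (C+1) * (1 - l/(C+1))⁻¹ := by
        rw [tsum_mul_left, tsum_geometric_of_lt_one hr0 hr]

lemma le_tail {l : ℝ} (hl : 0 ≤ l) (C : ℕ) : poisP l (C+1) ≤ poissonTail l C := by
  rw [tail_eq hl C]
  have hsum1 : Summable (fun j : ℕ => poisP l (j + (C+1))) :=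
    (summable_nat_add_iff (C+1)).2 (summable_poisP l)
  simpa using Summable.le_tsum hsum1 0 (fun i _ => poisP_nonneg hl _)

lemma log_factorial_le (n : ℕ) : Real.log (Nat.factorial n) ≤ n * Real.log n := by
  rw [← Real.log_pow]
  apply Real.log_le_log (by positivity)
  exact_mod_cast Nat.factorial_le_pow n

lemma le_log_factorial (n : ℕ) : n * Real.log n - n ≤ Real.log (Nat.factorial n) := by
  rcases Nat.eq_zero_or_pos n with hn | hn
  · simp [hn]
  have hn' : (0:ℝ) < n := by exact_mod_cast hn
  have h : ((n:ℝ))^n / (Nat.factorial n) ≤ Real.exp n := by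
    calc ((n:ℝ))^n / (Nat.factorial n) ≤ ∑ i ∈ Finset.range (n+1), (n:ℝ)^i / (Nat.factorial i) := by
          refine Finset.single_le_sum (f := fun i => (n:ℝ)^i / (Nat.factorial i)) (fun i _ => by positivity) ?_
          simp
      _ ≤ Real.exp n := Real.sum_le_exp_of_nonneg (Nat.cast_nonneg n) _
  have hfac : (0:ℝ) < Nat.factorial n := by positivity
  have h2 : ((n:ℝ))^n ≤ Real.exp n * Nat.factorial n := by
    rw [div_le_iff₀ hfac] at h; linarith
  have h3 := Real.log_le_log (by positivity) h2
  rw [Real.log_pow, Real.log_mul (Real.exp_ne_zero _) (ne_of_gt hfac), Real.log_exp] at h3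
  linarith

lemma tendsto_invlog : Tendsto (fun C : ℕ => (Real.log C)⁻¹) atTop (nhds 0) :=
  (Real.tendsto_log_atTop.comp tendsto_natCast_atTop_atTop).inv_tendsto_atTop

lemma eventually_one_le_log : ∀ᶠ C : ℕ in atTop, 1 ≤ Real.log C := by
  filter_upwards [eventually_ge_atTop 3] with C hC
  have hC3 : (3:ℝ) ≤ C := by exact_mod_cast hC
  have h1 : Real.exp 1 ≤ (C:ℝ) := by
    have := Real.exp_one_lt_d9
    linarith
  rw [Real.le_log_iff_exp_le (by linarith)]
  exact h1

lemma tendsto_logfac :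
    Tendsto (fun C : ℕ => Real.log (Nat.factorial (C+1)) / ((C:ℝ) * Real.log C))
      atTop (nhds 1) := by
  have hlow : ∀ᶠ C : ℕ in atTop,
      1 - (Real.log C)⁻¹ ≤ Real.log (Nat.factorial (C+1)) / ((C:ℝ) * Real.log C) := by
    filter_upwards [eventually_ge_atTop 1, eventually_one_le_log] with C hC1 hlog
    have hC0 : (0:ℝ) < C := by exact_mod_cast hC1
    have hD : (0:ℝ) < (C:ℝ) * Real.log C := mul_pos hC0 (by linarith)
    have h1 : (C:ℝ) * Real.log C - C ≤ Real.log (Nat.factorial (C+1)) := by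
      have := le_log_factorial C
      have h2 : Real.log (Nat.factorial C) ≤ Real.log (Nat.factorial (C+1)) :=
        Real.log_le_log (by positivity) (by exact_mod_cast Nat.factorial_le (Nat.le_succ C))
      linarith
    have h3 : ((C:ℝ) * Real.log C - C) / ((C:ℝ) * Real.log C) = 1 - (Real.log C)⁻¹ := by
      field_simp
    rw [← h3]
    gcongr
  have hhigh : ∀ᶠ C : ℕ in atTop,
      Real.log (Nat.factorial (C+1)) / ((C:ℝ) * Real.log C) ≤ 1 + 2 * (Real.log C)⁻¹ := by
    filter_upwards [eventually_ge_atTop 1, eventually_one_le_log] with C hC1 hlog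
    have hC0 : (0:ℝ) < C := by exact_mod_cast hC1
    have hC1' : (1:ℝ) ≤ C := by exact_mod_cast hC1
    have hD : (0:ℝ) < (C:ℝ) * Real.log C := mul_pos hC0 (by linarith)
    have hfc : (0:ℝ) < Nat.factorial C := by positivity
    have h1 : Real.log (Nat.factorial (C+1)) = Real.log ((C:ℝ)+1) + Real.log (Nat.factorial C) := by
      have : ((Nat.factorial (C+1) : ℕ) : ℝ) = ((C:ℝ)+1) * (Nat.factorial C : ℝ) := by
        rw [Nat.factorial_succ]; push_cast; ring
      rw [this, Real.log_mul (by linarith) (ne_of_gt hfc)]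
    have h2 : Real.log ((C:ℝ)+1) ≤ 2 * C := by
      have := Real.log_le_sub_one_of_pos (show (0:ℝ) < (C:ℝ)+1 by linarith)
      linarith
    have h3 : Real.log (Nat.factorial (C+1)) ≤ 2 * C + (C:ℝ) * Real.log C := by
      have := log_factorial_le C
      linarith
    have h4 : (2 * (C:ℝ) + (C:ℝ) * Real.log C) / ((C:ℝ) * Real.log C)
        = 1 + 2 * (Real.log C)⁻¹ := by
      field_simp
      ring
    rw [← h4]
    gcongr
  have l1 : Tendsto (fun C : ℕ => 1 - (Real.log C)⁻¹) atTop (nhds 1) := by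
    simpa using tendsto_const_nhds.sub tendsto_invlog
  have l2 : Tendsto (fun C : ℕ => 1 + 2 * (Real.log C)⁻¹) atTop (nhds 1) := by
    simpa using tendsto_const_nhds.add (tendsto_invlog.const_mul 2)
  exact tendsto_of_tendsto_of_tendsto_of_le_of_le' l1 l2 hlow hhigh

lemma tendsto_A (γ : ℝ) (hγ1 : γ < 1) :
    Tendsto (fun C : ℕ => ((C:ℝ)^γ) / ((C:ℝ) * Real.log C)) atTop (nhds 0) := by
  have hpow : Tendsto (fun C : ℕ => ((C:ℝ))^(γ-1)) atTop (nhds 0) := by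
    have h := (tendsto_rpow_neg_atTop (show (0:ℝ) < 1 - γ by linarith)).comp
      (tendsto_natCast_atTop_atTop (R := ℝ))
    refine h.congr fun C => ?_
    simp [Function.comp, neg_sub]
  have hlow : ∀ᶠ C : ℕ in atTop, 0 ≤ ((C:ℝ)^γ) / ((C:ℝ) * Real.log C) := by
    filter_upwards [eventually_ge_atTop 1, eventually_one_le_log] with C hC1 hlog
    have hC0 : (0:ℝ) < C := by exact_mod_cast hC1
    positivity
  have hhigh : ∀ᶠ C : ℕ in atTop, ((C:ℝ)^γ) / ((C:ℝ) * Real.log C) ≤ ((C:ℝ))^(γ-1) := by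
    filter_upwards [eventually_ge_atTop 1, eventually_one_le_log] with C hC1 hlog
    have hC0 : (0:ℝ) < C := by exact_mod_cast hC1
    have h1 : ((C:ℝ))^(γ-1) = ((C:ℝ)^γ) / (C:ℝ) := by
      rw [Real.rpow_sub hC0, Real.rpow_one]
    rw [h1]
    refine div_le_div_of_nonneg_left (by positivity) hC0 ?_
    nlinarith
  exact tendsto_of_tendsto_of_tendsto_of_le_of_le' tendsto_const_nhds hpow hlow hhigh

/-- For a Poisson random variable `Q` with mean `C^γ` (`0 < γ < 1`), the limit as
`C → ∞` of `-(log P(Q > C))/(C log C)` equals `1 - γ`. -/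
theorem poisson_polynomial_diversity (γ : ℝ) (hγ0 : 0 < γ) (hγ1 : γ < 1) :
    Tendsto (fun C : ℕ =>
        -(Real.log (poissonTail ((C : ℝ) ^ γ) C)) / ((C : ℝ) * Real.log C))
      atTop (nhds (1 - γ)) := by
  set g : ℕ → ℝ := fun C => ((C:ℝ)^γ) / ((C:ℝ) * Real.log C) - γ * (((C:ℝ)+1)/(C:ℝ))
      + Real.log (Nat.factorial (C+1)) / ((C:ℝ) * Real.log C) with hgdef
  have hgt : Tendsto g atTop (nhds (1 - γ)) := by
    have h1 := tendsto_A γ hγ1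
    have hfrac : Tendsto (fun C : ℕ => ((C:ℝ)+1)/(C:ℝ)) atTop (nhds 1) := by
      have h0 : Tendsto (fun C : ℕ => 1 + 1/(C:ℝ)) atTop (nhds 1) := by
        simpa using (tendsto_const_nhds (x := (1:ℝ))).add (tendsto_one_div_atTop_nhds_zero_nat (𝕜 := ℝ))
      refine h0.congr' ?_
      filter_upwards [eventually_gt_atTop 0] with C hC
      have hC0 : ((C:ℝ)) ≠ 0 := by
        have : (0:ℝ) < C := by exact_mod_cast hC
        positivity
      field_simp
    have h2 : Tendsto (fun C : ℕ => γ * (((C:ℝ)+1)/(C:ℝ))) atTop (nhds γ) := by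
      simpa using hfrac.const_mul γ
    have h3 := tendsto_logfac
    have h := (h1.sub h2).add h3
    have : (0 : ℝ) - γ + 1 = 1 - γ := by ring
    rwa [this] at h
  have hD : Tendsto (fun C : ℕ => (C:ℝ) * Real.log C) atTop atTop :=
    tendsto_natCast_atTop_atTop.atTop_mul_atTop₀
      (Real.tendsto_log_atTop.comp tendsto_natCast_atTop_atTop)
  have hres : Tendsto (fun C : ℕ => g C - Real.log 2 * ((C:ℝ) * Real.log C)⁻¹)
      atTop (nhds (1-γ)) := by
    have := hgt.sub ((hD.inv_tendsto_atTop).const_mul (Real.log 2))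
    simpa using this
  -- eventual r bound
  have hpow : Tendsto (fun C : ℕ => ((C:ℝ))^(γ-1)) atTop (nhds 0) := by
    have h := (tendsto_rpow_neg_atTop (show (0:ℝ) < 1 - γ by linarith)).comp
      (tendsto_natCast_atTop_atTop (R := ℝ))
    refine h.congr fun C => ?_
    simp [Function.comp, neg_sub]
  have hev2 : ∀ᶠ C : ℕ in atTop, ((C:ℝ))^(γ-1) ≤ 1/2 :=
    hpow.eventually (eventually_le_nhds (by norm_num))
  have hband : ∀ᶠ C : ℕ in atTop,
      g C - Real.log 2 * ((C:ℝ) * Real.log C)⁻¹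
        ≤ -(Real.log (poissonTail ((C : ℝ) ^ γ) C)) / ((C : ℝ) * Real.log C)
      ∧ -(Real.log (poissonTail ((C : ℝ) ^ γ) C)) / ((C : ℝ) * Real.log C) ≤ g C := by
    filter_upwards [eventually_ge_atTop 1, eventually_one_le_log, hev2] with C hC1 hlog hC2
    have hC0 : (0:ℝ) < C := by exact_mod_cast hC1
    set l : ℝ := (C:ℝ)^γ with hldef
    have hl0 : 0 < l := Real.rpow_pos_of_pos hC0 γ
    have hDp : (0:ℝ) < (C:ℝ) * Real.log C := mul_pos hC0 (by linarith)
    have hlC : l / (C:ℝ) = ((C:ℝ))^(γ-1) := by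
      rw [Real.rpow_sub hC0, Real.rpow_one]
    have hr12 : l / ((C:ℝ)+1) ≤ 1/2 := by
      have h1 : l / ((C:ℝ)+1) ≤ l / (C:ℝ) :=
        div_le_div_of_nonneg_left hl0.le hC0 (by linarith)
      rw [hlC] at h1
      linarith
    have hr1 : l / ((C:ℝ)+1) < 1 := by linarith
    have hp : 0 < poisP l (C+1) := poisP_pos hl0 _
    have hT1 : poisP l (C+1) ≤ poissonTail l C := le_tail hl0.le C
    have hT2 : poissonTail l C ≤ 2 * poisP l (C+1) := by
      have h1 := tail_le hl0.le C (by exact_mod_cast hr1)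
      have h2 : (1 - l/((C:ℝ)+1))⁻¹ ≤ 2 := by
        have h3 : (1:ℝ)/2 ≤ 1 - l/((C:ℝ)+1) := by linarith
        have := inv_anti₀ (by norm_num : (0:ℝ) < 1/2) h3
        simpa using this
      calc poissonTail l C ≤ poisP l (C+1) * (1 - l/((C:ℝ)+1))⁻¹ := h1
        _ ≤ poisP l (C+1) * 2 := by
            exact mul_le_mul_of_nonneg_left h2 hp.le
        _ = 2 * poisP l (C+1) := by ring
    have hTpos : 0 < poissonTail l C := lt_of_lt_of_le hp hT1
    have hlogp : Real.log (poisP l (C+1))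
        = -l + ((C:ℝ)+1) * (γ * Real.log C) - Real.log (Nat.factorial (C+1)) := by
      have hfac : (0:ℝ) < Nat.factorial (C+1) := by positivity
      unfold poisP
      rw [Real.log_div (by positivity) (ne_of_gt hfac),
        Real.log_mul (Real.exp_ne_zero _) (pow_ne_zero _ (ne_of_gt hl0)),
        Real.log_exp, Real.log_pow, hldef, Real.log_rpow hC0]
      push_cast
      ring
    have hlogT1 : Real.log (poisP l (C+1)) ≤ Real.log (poissonTail l C) :=
      Real.log_le_log hp hT1
    have hlogT2 : Real.log (poissonTail l C) ≤ Real.log 2 + Real.log (poisP l (C+1)) := by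
      have := Real.log_le_log hTpos hT2
      rwa [Real.log_mul two_ne_zero (ne_of_gt hp)] at this
    have hgC : g C = (l - ((C:ℝ)+1) * (γ * Real.log C) + Real.log (Nat.factorial (C+1)))
        / ((C:ℝ) * Real.log C) := by
      rw [hgdef]
      have hC0' : (C:ℝ) ≠ 0 := ne_of_gt hC0
      have hlog0 : Real.log C ≠ 0 := by linarith
      field_simp
      ring
    constructor
    · rw [hgC]
      have h1 : -(Real.log (poissonTail l C))
          ≥ l - ((C:ℝ)+1) * (γ * Real.log C) + Real.log (Nat.factorial (C+1))
            - Real.log 2 := by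
        rw [hlogp] at hlogT2
        linarith
      have h2 := div_le_div_of_nonneg_right (by linarith : l - ((C:ℝ)+1) * (γ * Real.log C) + Real.log (Nat.factorial (C+1)) - Real.log 2 ≤ -(Real.log (poissonTail l C))) hDp.le
      calc (l - ((C:ℝ)+1) * (γ * Real.log C) + Real.log (Nat.factorial (C+1)))
            / ((C:ℝ) * Real.log C) - Real.log 2 * ((C:ℝ) * Real.log C)⁻¹
          = (l - ((C:ℝ)+1) * (γ * Real.log C) + Real.log (Nat.factorial (C+1)) - Real.log 2)
            / ((C:ℝ) * Real.log C) := by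
            field_simp
        _ ≤ -(Real.log (poissonTail l C)) / ((C:ℝ) * Real.log C) := h2
    · rw [hgC]
      have h1 : -(Real.log (poissonTail l C))
          ≤ l - ((C:ℝ)+1) * (γ * Real.log C) + Real.log (Nat.factorial (C+1)) := by
        rw [hlogp] at hlogT1
        linarith
      exact div_le_div_of_nonneg_right h1 hDp.le
  exact tendsto_of_tendsto_of_tendsto_of_le_of_le' hres hgt
    (hband.mono fun C h => h.1) (hband.mono fun C h => h.2)
end

section
/- Consider the Markov chain N(n+1) = Q(n) if N(n) ≥ C; N(n+1) = Q(n)/2 + N(n) - C if N(n) < C and N(n) + Q(n)/2 ≥ C; N(n+1) = Q(n)/2 if N(n) + Q(n)/2 < C, where Q(n) are i.i.d. with mean γC, γ ∈ (0,1). Then the drift E[N(n+1) - N(n) | N(n) = i] is at most -(1-γ)C when i ≥ C and at most (γ/2)C when i < C; consequently (by Foster's criterion) the chain is positive recurrent. -/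
open MeasureTheory Real

/-- One-step transition map of the dynamic-capacity Markov chain with `f = 1/2`,
`T = 1`: from state `i` with arrival `q`, the next state is `q` if `i ≥ C`;
`q/2 + i - C` if `i < C ≤ i + q/2`; and `q/2` if `i + q/2 < C`. -/
noncomputable def nextState (C i q : ℝ) : ℝ :=
  if C ≤ i then q else if C ≤ i + q / 2 then q / 2 + i - C else q / 2

lemma nextState_measurable (C i : ℝ) : Measurable (fun q => nextState C i q) := by
  unfold nextState
  by_cases h : C ≤ i
  · simpa [h] using measurable_id'
  · simp only [h, if_false]
    apply Measurable.ite
    · exact measurableSet_le measurable_const (by fun_prop)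
    · fun_prop
    · fun_prop

/-- Drift bounds for the dynamic-capacity chain (Foster's criterion): with arrivals
`Q` i.i.d. of mean `γC` (`0 < γ < 1`), the drift `E[N(n+1) - N(n) | N(n) = i]` is at
most `-(1-γ)C` when `i ≥ C`, and at most `(γ/2)C` when `i < C`. -/
theorem dynamic_capacity_drift
    {Ω : Type*} [MeasureSpace Ω] (μ : Measure Ω) [IsProbabilityMeasure μ]
    (Q : Ω → ℝ) (hQint : Integrable Q μ) (hQpos : ∀ ω, 0 ≤ Q ω)
    (γ C : ℝ) (hγ0 : 0 < γ) (hγ1 : γ < 1) (hC : 0 < C)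
    (hmean : ∫ ω, Q ω ∂μ = γ * C) :
    ∀ i : ℝ, 0 ≤ i →
      (C ≤ i → (∫ ω, (nextState C i (Q ω) - i) ∂μ) ≤ -((1 - γ) * C)) ∧
      (i < C → (∫ ω, (nextState C i (Q ω) - i) ∂μ) ≤ (γ / 2) * C) := by
  intro i hi
  have hint : Integrable (fun ω => nextState C i (Q ω) - i) μ := by
    have hmeas : AEStronglyMeasurable (fun ω => nextState C i (Q ω) - i) μ := by
      have := ((nextState_measurable C i).comp_aemeasurable hQint.aemeasurable)
      exact (this.sub aemeasurable_const).aestronglyMeasurable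
    have hbd : Integrable (fun ω => Q ω + (C + i)) μ := hQint.add (integrable_const _)
    refine hbd.mono hmeas (Filter.Eventually.of_forall fun ω => ?_)
    have hq := hQpos ω
    simp only [Real.norm_eq_abs]
    rw [abs_of_nonneg (by linarith : (0:ℝ) ≤ Q ω + (C + i))]
    unfold nextState
    split_ifs with h1 h2 <;> rw [abs_sub_le_iff] <;> constructor <;> linarith
  constructor
  · intro hCi
    have heq : (fun ω => nextState C i (Q ω) - i) = fun ω => Q ω - i := by
      funext ω; simp [nextState, hCi]
    rw [heq, integral_sub hQint (integrable_const _), hmean, integral_const]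
    simp only [measure_univ, ENNReal.toReal_one, smul_eq_mul, one_mul, probReal_univ]
    linarith
  · intro hiC
    have hle : ∀ ω, nextState C i (Q ω) - i ≤ Q ω / 2 := by
      intro ω
      have hq := hQpos ω
      unfold nextState
      split_ifs with h1 h2 <;> linarith
    have : (∫ ω, (nextState C i (Q ω) - i) ∂μ) ≤ ∫ ω, Q ω / 2 ∂μ :=
      integral_mono hint (hQint.div_const 2) hle
    rw [integral_div, hmean] at this
    linarith
end

section
/- Let S = Σ_{l=1}^{θC} X_l where X_l are i.i.d. Bernoulli with parameter A = 1 - e^{-γ/θ}, with 0 < γ < 1 and θ > 1. Then lim_{C→∞} -(1/C) log P(S > C) = (θ-1)log(θ-1) - θ log θ + γ(θ-1)/θ - log(1 - e^{-γ/θ}). -/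
open Filter Real

/-- Tail probability `P(S > a)` for `S` binomial with `n` trials and success
probability `A`. -/

noncomputable def binomTail (n : ℕ) (A : ℝ) (a : ℝ) : ℝ :=
  ∑ k ∈ Finset.range (n + 1), if a < (k : ℝ) then (n.choose k : ℝ) * A ^ k * (1 - A) ^ (n - k) else 0

private noncomputable def tTerm (θ A : ℝ) (C j : ℕ) : ℝ :=
  ((⌊θ * (C:ℝ)⌋₊).choose j : ℝ) * A ^ j * (1 - A) ^ (⌊θ * (C:ℝ)⌋₊ - j)


private lemma tTerm_nonneg {θ A : ℝ} (hA0 : 0 ≤ A) (hA1 : A ≤ 1) (C j : ℕ) :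
    0 ≤ tTerm θ A C j :=
  mul_nonneg (mul_nonneg (Nat.cast_nonneg _) (pow_nonneg hA0 _))
    (pow_nonneg (by linarith) _)

private lemma binomTail_eq (n C : ℕ) (A : ℝ) :
    binomTail n A C = ∑ k ∈ Finset.Ico (C+1) (n+1),
      (n.choose k : ℝ) * A ^ k * (1 - A) ^ (n - k) := by
  rw [binomTail, ← Finset.sum_filter]
  congr 1
  ext k
  simp only [Finset.mem_filter, Finset.mem_range, Finset.mem_Ico, Nat.cast_lt]
  omega

private lemma term_step {γ θ A : ℝ} (hθ : 1 < θ) (hA0 : 0 < A) (hA1 : A < 1)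
    (hθA : θ * A < 1) (C : ℕ) (hC0 : 0 < C) :
    ∀ j, C + 1 ≤ j → tTerm θ A C (j+1) ≤ ((θ-1)*A/(1-A)) * tTerm θ A C j := by
  intro j hj
  set n := ⌊θ * (C:ℝ)⌋₊ with hn
  have h1A : (0:ℝ) < 1 - A := by linarith
  have htj := tTerm_nonneg (θ := θ) hA0.le hA1.le C j
  by_cases hjn : j < n
  · have hpow : (1-A)^(n-j) = (1-A)^(n-(j+1)) * (1-A) := by
      rw [← pow_succ]; congr 1; omega
    have hcc : ((n.choose (j+1)) : ℝ) * ((j:ℝ)+1) = (n.choose j : ℝ) * ((n - j : ℕ) : ℝ) := by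
      exact_mod_cast Nat.choose_succ_right_eq n j
    have hid : tTerm θ A C (j+1) * (((j:ℝ)+1)*(1-A))
        = tTerm θ A C j * (((n - j : ℕ):ℝ) * A) := by
      simp only [tTerm, ← hn]
      rw [hpow, pow_succ]
      linear_combination (A ^ j * A * (1 - A) ^ (n - (j+1)) * (1 - A)) * hcc
    have hbnd : ((n - j : ℕ):ℝ) * A ≤ ((θ-1)*A/(1-A)) * (((j:ℝ)+1)*(1-A)) := by
      have heq : ((θ-1)*A/(1-A)) * (((j:ℝ)+1)*(1-A)) = (θ-1)*A*((j:ℝ)+1) := by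
        field_simp
      rw [heq]
      have hsub : ((n - j : ℕ):ℝ) = (n:ℝ) - j := by
        rw [Nat.cast_sub (by omega)]
      have hfl : (n:ℝ) ≤ θ * C := Nat.floor_le (by positivity)
      have hjC : (C:ℝ) + 1 ≤ j := by exact_mod_cast hj
      have hCr : (0:ℝ) < C := by exact_mod_cast hC0
      rw [hsub]
      have h1 : (n:ℝ) - j ≤ (θ-1)*((j:ℝ)+1) := by
        nlinarith [mul_nonneg (by linarith : (0:ℝ) ≤ θ-1)
          (by linarith : (0:ℝ) ≤ (j:ℝ) - (C:ℝ) - 1)]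
      nlinarith [mul_le_mul_of_nonneg_right h1 hA0.le]
    have hKpos : (0:ℝ) < ((j:ℝ)+1)*(1-A) := by positivity
    apply le_of_mul_le_mul_right ?_ hKpos
    calc tTerm θ A C (j+1) * (((j:ℝ)+1)*(1-A)) = tTerm θ A C j * (((n - j : ℕ):ℝ) * A) := hid
      _ ≤ tTerm θ A C j * (((θ-1)*A/(1-A)) * (((j:ℝ)+1)*(1-A))) :=
          mul_le_mul_of_nonneg_left hbnd htj
      _ = ((θ-1)*A/(1-A)) * tTerm θ A C j * (((j:ℝ)+1)*(1-A)) := by ring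
  · have : n.choose (j+1) = 0 := Nat.choose_eq_zero_of_lt (by omega)
    have hz : tTerm θ A C (j+1) = 0 := by
      simp only [tTerm, ← hn, this]
      simp
    rw [hz]
    have hr0 : 0 ≤ (θ-1)*A/(1-A) :=
      div_nonneg (mul_nonneg (by linarith) hA0.le) h1A.le
    exact mul_nonneg hr0 htj

private lemma sum_le_geom {t : ℕ → ℝ} {r : ℝ} (hr0 : 0 ≤ r) (hr1 : r < 1)
    (k n : ℕ) (ht0 : ∀ j, 0 ≤ t j)
    (hstep : ∀ j, k ≤ j → t (j+1) ≤ r * t j) :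
    ∑ j ∈ Finset.Ico k (n+1), t j ≤ t k * (1-r)⁻¹ := by
  have hpow : ∀ i, t (k + i) ≤ t k * r ^ i := by
    intro i; induction i with
    | zero => simp
    | succ i ih =>
      calc t (k+i+1) ≤ r * t (k+i) := hstep (k+i) (Nat.le_add_right _ _)
        _ ≤ r * (t k * r^i) := mul_le_mul_of_nonneg_left ih hr0
        _ = t k * r^(i+1) := by ring
  rw [Finset.sum_Ico_eq_sum_range]
  calc ∑ i ∈ Finset.range (n+1-k), t (k+i)
      ≤ ∑ i ∈ Finset.range (n+1-k), t k * r^i :=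
        Finset.sum_le_sum fun i _ => hpow i
    _ = t k * ∑ i ∈ Finset.range (n+1-k), r^i := by rw [Finset.mul_sum]
    _ ≤ t k * (1-r)⁻¹ := by
        apply mul_le_mul_of_nonneg_left ?_ (ht0 k)
        calc ∑ i ∈ Finset.range (n+1-k), r^i
            ≤ ∑' i : ℕ, r^i := (summable_geometric_of_lt_one hr0 hr1).sum_le_tsum _ (fun i _ => pow_nonneg hr0 i)
          _ = (1-r)⁻¹ := tsum_geometric_of_lt_one hr0 hr1


noncomputable def Eerr (m : ℕ) : ℝ := Real.log (Nat.factorial m) - ((m:ℝ) * Real.log m - m)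

private lemma xlogx_tendsto {f : ℕ → ℝ} {a : ℝ} (ha : 0 < a)
    (hf : Tendsto f atTop (nhds a)) :
    Tendsto (fun C => f C * Real.log (f C)) atTop (nhds (a * Real.log a)) :=
  (continuousAt_id.mul (Real.continuousAt_log ha.ne')).tendsto.comp hf

private lemma floor_ratio {θ : ℝ} (hθ : 0 < θ) :
    Tendsto (fun C : ℕ => (⌊θ * (C : ℝ)⌋₊ : ℝ) / C) atTop (nhds θ) := by
  have h1 : Tendsto (fun C : ℕ => θ - 1 / (C : ℝ)) atTop (nhds θ) := by
    simpa using tendsto_const_nhds.sub (tendsto_one_div_atTop_nhds_zero_nat (𝕜 := ℝ))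
  refine tendsto_of_tendsto_of_tendsto_of_le_of_le' h1 tendsto_const_nhds ?_ ?_
  · filter_upwards [eventually_gt_atTop 0] with C hC
    have hC' : (0:ℝ) < C := by exact_mod_cast hC
    rw [sub_le_iff_le_add, ← add_div, le_div_iff₀ hC']
    nlinarith [Nat.sub_one_lt_floor (θ * (C:ℝ))]
  · filter_upwards [eventually_gt_atTop 0] with C hC
    have hC' : (0:ℝ) < C := by exact_mod_cast hC
    rw [div_le_iff₀ hC']
    exact Nat.floor_le (by positivity)

private lemma succ_ratio : Tendsto (fun C : ℕ => ((C : ℝ) + 1) / C) atTop (nhds 1) := by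
  have : ∀ᶠ C : ℕ in atTop, ((C:ℝ) + 1)/C = 1 + 1/C := by
    filter_upwards [eventually_gt_atTop 0] with C hC
    have : (C:ℝ) ≠ 0 := by positivity
    field_simp
  rw [tendsto_congr' this]
  simpa using tendsto_const_nhds.add (tendsto_one_div_atTop_nhds_zero_nat (𝕜 := ℝ))

private lemma Eerr_eq (m : ℕ) (hm : 1 ≤ m) :
    Eerr m = Real.log (Stirling.stirlingSeq m) + 1/2 * Real.log (2*m) := by
  have h := Stirling.log_stirlingSeq_formula m
  have hm' : (0:ℝ) < m := by exact_mod_cast hm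
  have : (m:ℝ) * Real.log ((m:ℝ) / Real.exp 1) = (m:ℝ) * Real.log m - m := by
    rw [Real.log_div hm'.ne' (Real.exp_ne_zero 1), Real.log_exp]; ring
  rw [Eerr, ← this]; linarith [h]

private lemma Eerr_bound : ∃ B : ℝ, ∀ m : ℕ, 1 ≤ m → |Eerr m| ≤ B + Real.log (2*m) := by
  have hlim : Tendsto (fun m => Real.log (Stirling.stirlingSeq m)) atTop
      (nhds (Real.log (Real.sqrt π))) :=
    ((Real.continuousAt_log (by positivity)).tendsto.comp Stirling.tendsto_stirlingSeq_sqrt_pi)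
  obtain ⟨B1, hB1⟩ := hlim.bddAbove_range
  obtain ⟨B2, hB2⟩ := hlim.bddBelow_range
  refine ⟨max B1 (-B2), fun m hm => ?_⟩
  rw [Eerr_eq m hm]
  have h1 : Real.log (Stirling.stirlingSeq m) ≤ B1 := hB1 ⟨m, rfl⟩
  have h2 : B2 ≤ Real.log (Stirling.stirlingSeq m) := hB2 ⟨m, rfl⟩
  have hlog : 0 ≤ Real.log (2*m) := by
    apply Real.log_nonneg
    have : (1:ℝ) ≤ (m:ℝ) := by exact_mod_cast hm
    linarith
  rw [abs_le]
  constructor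
  · have : -(max B1 (-B2)) ≤ B2 := by
      have := le_max_right B1 (-B2); linarith
    nlinarith
  · have : B1 ≤ max B1 (-B2) := le_max_left _ _
    nlinarith

private lemma log_div_nat_tendsto : Tendsto (fun C : ℕ => Real.log C / C) atTop (nhds 0) :=
  Real.isLittleO_log_id_atTop.tendsto_div_nhds_zero.comp tendsto_natCast_atTop_atTop

private lemma stirling_ratio {m : ℕ → ℕ} {a : ℝ} (ha : 0 < a)
    (hm : Tendsto (fun C : ℕ => (m C : ℝ) / C) atTop (nhds a)) :
    Tendsto (fun C : ℕ => Eerr (m C) / C) atTop (nhds 0) := by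
  obtain ⟨B, hB⟩ := Eerr_bound
  have hev : ∀ᶠ C : ℕ in atTop, (m C : ℝ) / C ∈ Set.Ioo (a/2) (a+1) :=
    hm (Ioo_mem_nhds (by linarith) (by linarith))
  have habs : Tendsto (fun C : ℕ => |Eerr (m C) / C|) atTop (nhds 0) := by
    apply squeeze_zero' (g := fun C : ℕ => (B + Real.log (2*(a+1))) / C + Real.log C / C)
        (Eventually.of_forall fun _ => abs_nonneg _)
    · filter_upwards [hev, eventually_gt_atTop 0] with C hC hC0
      have hCpos : (0:ℝ) < C := by exact_mod_cast hC0
      have hm1 : 1 ≤ m C := by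
        by_contra h
        push_neg at h
        interval_cases h' : m C
        · simp [h'] at hC; linarith [hC.1]
      have hub : (m C : ℝ) ≤ (a+1) * C := by
        have := hC.2
        rw [div_lt_iff₀ hCpos] at this; linarith
      have hm0 : (0:ℝ) < m C := by exact_mod_cast hm1
      have hlog : Real.log (2 * (m C : ℝ)) ≤ Real.log (2*(a+1)) + Real.log C := by
        rw [← Real.log_mul (by positivity) hCpos.ne']
        apply Real.log_le_log (by positivity)
        nlinarith
      have h1 : |Eerr (m C) / C| ≤ (B + Real.log (2 * (m C:ℝ))) / C := by
        rw [abs_div, abs_of_pos hCpos]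
        gcongr
        exact hB (m C) hm1
      calc |Eerr (m C) / C| ≤ (B + Real.log (2 * (m C:ℝ))) / C := h1
        _ ≤ (B + (Real.log (2*(a+1)) + Real.log C)) / C := by gcongr
        _ = (B + Real.log (2*(a+1))) / C + Real.log C / C := by ring
    · have h2 : Tendsto (fun C : ℕ => (B + Real.log (2*(a+1))) / C) atTop (nhds 0) := by
        simpa [div_eq_mul_inv] using tendsto_const_nhds.mul (tendsto_one_div_atTop_nhds_zero_nat (𝕜 := ℝ))
      simpa using h2.add log_div_nat_tendsto
  exact (tendsto_zero_iff_abs_tendsto_zero _).mpr habs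


private lemma floor_ev {θ : ℝ} (hθ : 1 < θ) :
    ∀ᶠ C : ℕ in atTop, C + 2 ≤ ⌊θ * (C:ℝ)⌋₊ := by
  have h := tendsto_natCast_atTop_atTop (R := ℝ).eventually_ge_atTop (2/(θ-1))
  filter_upwards [h, eventually_gt_atTop 0] with C hC hC0
  rw [Nat.le_floor_iff (by positivity)]
  push_cast
  have hθ1 : (0:ℝ) < θ - 1 := by linarith
  rw [div_le_iff₀ hθ1] at hC
  nlinarith

private lemma main_term_limit {θ A : ℝ} (hθ : 1 < θ) (hA0 : 0 < A) (hA1 : A < 1) :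
    Tendsto (fun C : ℕ => -(1/(C:ℝ)) * Real.log (tTerm θ A C (C+1))) atTop
      (nhds (-(0 - 0 - 0) - (θ * Real.log θ - 1 * Real.log 1 - (θ-1) * Real.log (θ-1))
        - 1 * Real.log A - (θ-1) * Real.log (1-A))) := by
  have hθ0 : (0:ℝ) < θ := by linarith
  have hn_r : Tendsto (fun C : ℕ => ((⌊θ * (C:ℝ)⌋₊ : ℕ) : ℝ)/C) atTop (nhds θ) :=
    floor_ratio hθ0
  have hk_r : Tendsto (fun C : ℕ => ((C:ℝ)+1)/C) atTop (nhds 1) := succ_ratio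
  have hk_r' : Tendsto (fun C : ℕ => (((C+1:ℕ)):ℝ)/C) atTop (nhds 1) := by
    convert hk_r using 2
    push_cast; ring
  have hev2 := floor_ev hθ
  have hm_r : Tendsto (fun C : ℕ => ((⌊θ * (C:ℝ)⌋₊ - (C+1) : ℕ) : ℝ)/C) atTop
      (nhds (θ - 1)) := by
    apply Tendsto.congr' ?_ (by simpa using hn_r.sub hk_r)
    filter_upwards [hev2] with C h2
    rw [Nat.cast_sub (by omega)]
    push_cast
    ring
  have S1 := stirling_ratio hθ0 hn_r
  have S2 := stirling_ratio one_pos hk_r'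
  have S3 := stirling_ratio (by linarith : (0:ℝ) < θ - 1) hm_r
  have X1 := xlogx_tendsto hθ0 hn_r
  have X2 := xlogx_tendsto one_pos hk_r
  have X3 := xlogx_tendsto (by linarith : (0:ℝ) < θ - 1) hm_r
  have P7 := hk_r.mul_const (Real.log A)
  have P8 := hm_r.mul_const (Real.log (1-A))
  have G := ((((((S1.sub S2).sub S3).neg).sub ((X1.sub X2).sub X3)).sub P7).sub P8)
  apply Tendsto.congr' ?_ G
  filter_upwards [hev2, eventually_gt_atTop 0] with C h2 hC0
  set N := ⌊θ * (C:ℝ)⌋₊ with hN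
  set M := N - (C+1) with hM
  have hkN : C + 1 ≤ N := by omega
  have hM1 : 1 ≤ M := by omega
  have hNs : N = (C+1) + M := by omega
  have hCr : (0:ℝ) < C := by exact_mod_cast hC0
  have hNr : (0:ℝ) < N := by exact_mod_cast (by omega : 0 < N)
  have hMr : (0:ℝ) < M := by exact_mod_cast hM1
  have hKr : (0:ℝ) < (C:ℝ) + 1 := by linarith
  have hcast : (N:ℝ) = ((C:ℝ)+1) + M := by rw [hNs]; push_cast; ring
  have hchoose : (0:ℝ) < (N.choose (C+1) : ℝ) := by exact_mod_cast Nat.choose_pos hkN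
  have hfacN : (0:ℝ) < (Nat.factorial N : ℝ) := by exact_mod_cast N.factorial_pos
  have hfacK : (0:ℝ) < (Nat.factorial (C+1) : ℝ) := by exact_mod_cast (C+1).factorial_pos
  have hfacM : (0:ℝ) < (Nat.factorial M : ℝ) := by exact_mod_cast M.factorial_pos
  have hlogt : Real.log (tTerm θ A C (C+1))
      = Real.log (N.choose (C+1) : ℝ) + ((C:ℝ)+1) * Real.log A + (M:ℝ) * Real.log (1-A) := by
    rw [tTerm, ← hN, ← hM]
    have h1A : (0:ℝ) < 1 - A := by linarith
    rw [Real.log_mul (mul_ne_zero hchoose.ne' (pow_ne_zero _ hA0.ne'))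
          (pow_ne_zero _ h1A.ne'),
        Real.log_mul hchoose.ne' (pow_ne_zero _ hA0.ne'), Real.log_pow, Real.log_pow]
    push_cast
    ring
  have hcfact : (N.choose (C+1) : ℝ) * (Nat.factorial (C+1) : ℝ) * (Nat.factorial M : ℝ)
      = (Nat.factorial N : ℝ) := by
    exact_mod_cast congrArg (Nat.cast (R := ℝ)) (Nat.choose_mul_factorial_mul_factorial hkN)
  have hlogc : Real.log (N.choose (C+1) : ℝ)
      = Real.log (Nat.factorial N : ℝ) - Real.log (Nat.factorial (C+1) : ℝ)
        - Real.log (Nat.factorial M : ℝ) := by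
    rw [← hcfact, Real.log_mul (by positivity) hfacM.ne', Real.log_mul hchoose.ne' hfacK.ne']
    ring
  rw [hlogt, hlogc]
  simp only [Eerr]
  rw [Real.log_div hNr.ne' hCr.ne', Real.log_div hKr.ne' hCr.ne', Real.log_div hMr.ne' hCr.ne']
  push_cast
  rw [hcast]
  field_simp
  ring

/-- Diversity gain of the non-predictive symmetric multicast network: with
`S = Σ_{l=1}^{θC} X_l`, `X_l` i.i.d. Bernoulli with parameter `A = 1 - e^{-γ/θ}`
(`0 < γ < 1`, `θ > 1`),
`lim -(1/C) log P(S > C) = (θ-1)log(θ-1) - θ log θ + γ(θ-1)/θ - log(1-e^{-γ/θ})`. -/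

theorem multicast_nonpredictive_diversity (γ θ : ℝ) (hγ0 : 0 < γ) (hγ1 : γ < 1) (hθ : 1 < θ) :
    Tendsto (fun C : ℕ =>
        -(1 / (C : ℝ)) * Real.log (binomTail ⌊θ * (C : ℝ)⌋₊ (1 - Real.exp (-(γ / θ))) C))
      atTop
      (nhds ((θ - 1) * Real.log (θ - 1) - θ * Real.log θ + γ * ((θ - 1) / θ) -
        Real.log (1 - Real.exp (-(γ / θ))))) := by
  have hθ0 : (0:ℝ) < θ := by linarith
  have hx : 0 < γ/θ := by positivity
  have hE1 : Real.exp (-(γ/θ)) < 1 := by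
    rw [Real.exp_lt_one_iff]
    linarith
  set A : ℝ := 1 - Real.exp (-(γ/θ)) with hAdef
  have hA0 : 0 < A := by rw [hAdef]; linarith
  have h1A : 1 - A = Real.exp (-(γ/θ)) := by rw [hAdef]; ring
  have hA1 : A < 1 := by
    have := Real.exp_pos (-(γ/θ)); rw [hAdef]; linarith
  have h1Ap : (0:ℝ) < 1 - A := by linarith
  have hAsm : A < γ/θ := by
    have h := Real.add_one_lt_exp (x := -(γ/θ)) (by linarith : -(γ/θ) ≠ 0)
    rw [hAdef]; linarith
  have hθA : θ * A < 1 := by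
    have h1 : θ * A < θ * (γ/θ) := by exact mul_lt_mul_of_pos_left hAsm hθ0
    have h2 : θ * (γ/θ) = γ := by field_simp
    rw [h2] at h1
    linarith
  set r : ℝ := (θ-1)*A/(1-A) with hrdef
  have hr0 : 0 ≤ r := div_nonneg (mul_nonneg (by linarith) hA0.le) h1Ap.le
  have hr1 : r < 1 := by rw [hrdef, div_lt_one h1Ap]; nlinarith
  -- main term limit, with the value rewritten to the target
  have hval : (-(0 - 0 - 0) - (θ * Real.log θ - 1 * Real.log 1 - (θ-1) * Real.log (θ-1))
        - 1 * Real.log A - (θ-1) * Real.log (1-A))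
      = ((θ - 1) * Real.log (θ - 1) - θ * Real.log θ + γ * ((θ - 1) / θ) - Real.log A) := by
    rw [h1A, Real.log_exp, Real.log_one]
    ring
  have hmt : Tendsto (fun C : ℕ => -(1/(C:ℝ)) * Real.log (tTerm θ A C (C+1))) atTop
      (nhds ((θ - 1) * Real.log (θ - 1) - θ * Real.log θ + γ * ((θ - 1) / θ) -
        Real.log A)) := by
    rw [← hval]
    exact main_term_limit hθ hA0 hA1
  have hz : Tendsto (fun C : ℕ => (1/(C:ℝ)) * Real.log (1-r)⁻¹) atTop (nhds 0) := by
    simpa using (tendsto_one_div_atTop_nhds_zero_nat (𝕜 := ℝ)).mul_const (Real.log (1-r)⁻¹)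
  have hlow : Tendsto (fun C : ℕ => -(1/(C:ℝ)) * Real.log (tTerm θ A C (C+1))
      - (1/(C:ℝ)) * Real.log (1-r)⁻¹) atTop
      (nhds ((θ - 1) * Real.log (θ - 1) - θ * Real.log θ + γ * ((θ - 1) / θ) -
        Real.log A)) := by
    have := hmt.sub hz
    rwa [sub_zero] at this
  refine tendsto_of_tendsto_of_tendsto_of_le_of_le' hlow hmt ?_ ?_
  · -- lower bound
    filter_upwards [floor_ev hθ, eventually_gt_atTop 0] with C h2 hC0
    have hCr : (0:ℝ) < C := by exact_mod_cast hC0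
    have h1C : (0:ℝ) ≤ 1/(C:ℝ) := by positivity
    have hkN : C + 1 ≤ ⌊θ * (C:ℝ)⌋₊ := by omega
    have htpos : 0 < tTerm θ A C (C+1) := by
      have hc : (0:ℝ) < ((⌊θ * (C:ℝ)⌋₊).choose (C+1) : ℝ) := by
        exact_mod_cast Nat.choose_pos hkN
      exact mul_pos (mul_pos hc (pow_pos hA0 _)) (pow_pos h1Ap _)
    have hlb : tTerm θ A C (C+1) ≤ binomTail ⌊θ * (C:ℝ)⌋₊ A C := by
      rw [binomTail_eq]
      exact Finset.single_le_sum
        (f := fun k => ((⌊θ * (C:ℝ)⌋₊).choose k : ℝ) * A ^ k * (1-A) ^ (⌊θ * (C:ℝ)⌋₊ - k))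
        (fun k _ => tTerm_nonneg (θ := θ) hA0.le hA1.le C k)
        (Finset.mem_Ico.mpr ⟨le_refl _, by omega⟩)
    have htail_pos : 0 < binomTail ⌊θ * (C:ℝ)⌋₊ A C := lt_of_lt_of_le htpos hlb
    have hub : binomTail ⌊θ * (C:ℝ)⌋₊ A C ≤ tTerm θ A C (C+1) * (1-r)⁻¹ := by
      rw [binomTail_eq]
      exact sum_le_geom hr0 hr1 (C+1) ⌊θ * (C:ℝ)⌋₊
        (fun j => tTerm_nonneg (θ := θ) hA0.le hA1.le C j)
        (fun j hj => by
          have := term_step (γ := γ) hθ hA0 hA1 hθA C hC0 j hj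
          rwa [← hrdef] at this)
    have hlog : Real.log (binomTail ⌊θ * (C:ℝ)⌋₊ A C)
        ≤ Real.log (tTerm θ A C (C+1)) + Real.log (1-r)⁻¹ := by
      have := Real.log_le_log htail_pos hub
      rwa [Real.log_mul htpos.ne' (inv_pos.mpr (by linarith : (0:ℝ) < 1 - r)).ne'] at this
    linarith [mul_le_mul_of_nonneg_left hlog h1C]
  · -- upper bound
    filter_upwards [floor_ev hθ, eventually_gt_atTop 0] with C h2 hC0
    have hCr : (0:ℝ) < C := by exact_mod_cast hC0
    have h1C : (0:ℝ) ≤ 1/(C:ℝ) := by positivity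
    have hkN : C + 1 ≤ ⌊θ * (C:ℝ)⌋₊ := by omega
    have htpos : 0 < tTerm θ A C (C+1) := by
      have hc : (0:ℝ) < ((⌊θ * (C:ℝ)⌋₊).choose (C+1) : ℝ) := by
        exact_mod_cast Nat.choose_pos hkN
      exact mul_pos (mul_pos hc (pow_pos hA0 _)) (pow_pos h1Ap _)
    have hlb : tTerm θ A C (C+1) ≤ binomTail ⌊θ * (C:ℝ)⌋₊ A C := by
      rw [binomTail_eq]
      exact Finset.single_le_sum
        (f := fun k => ((⌊θ * (C:ℝ)⌋₊).choose k : ℝ) * A ^ k * (1-A) ^ (⌊θ * (C:ℝ)⌋₊ - k))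
        (fun k _ => tTerm_nonneg (θ := θ) hA0.le hA1.le C k)
        (Finset.mem_Ico.mpr ⟨le_refl _, by omega⟩)
    have hlog := Real.log_le_log htpos hlb
    nlinarith [mul_le_mul_of_nonneg_left hlog h1C]
end

section
/- With d_N(γ,θ) = (θ-1)log(θ-1) - θ log θ + γ(θ-1)/θ - log(1-e^{-γ/θ}) for θ > 1 and γ ∈ (0,1): lim_{θ→∞} d_N(γ,θ) = γ - 1 - log γ, and d_N(γ,θ) > γ - 1 - log γ for all θ > 1. -/
open Filter Real

/-- Multicast non-predictive diversity gain with `θC` symmetric sources. -/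
noncomputable def dN (γ θ : ℝ) : ℝ :=
  (θ - 1) * Real.log (θ - 1) - θ * Real.log θ + γ * ((θ - 1) / θ) -
    Real.log (1 - Real.exp (-(γ / θ)))


lemma exp_quartic {x : ℝ} (h : |x| ≤ 1) :
    |Real.exp x - (1 + x + x^2/2 + x^3/6)| ≤ 5*|x|^4/96 := by
  have h2 := Real.exp_bound h (n := 4) (by norm_num)
  simp [Finset.sum_range_succ, Nat.factorial] at h2
  calc |Real.exp x - (1 + x + x^2/2 + x^3/6)|
      ≤ |x|^4 * (5/(24*4)) := h2
    _ = 5*|x|^4/96 := by ring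

lemma log_one_sub_le {s : ℝ} (h0 : 0 ≤ s) (h1 : s < 1) :
    Real.log (1 - s) ≤ -s - s^2/2 := by
  rw [Real.log_le_iff_le_exp (by linarith)]
  have hxabs : |(-s)| ≤ 1 := by rw [abs_neg, abs_of_nonneg h0]; linarith
  have h2 := exp_quartic hxabs
  rw [abs_neg, abs_of_nonneg h0] at h2
  have hlow : 1 - s + s^2/2 - s^3/6 - 5*s^4/96 ≤ Real.exp (-s) := by
    have := abs_le.1 h2
    nlinarith [this.1]
  have h3 : (1 : ℝ) - s^2/2 ≤ Real.exp (-(s^2/2)) := by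
    have := Real.add_one_le_exp (-(s^2/2)); linarith
  have hexp : Real.exp (-s - s^2/2) = Real.exp (-s) * Real.exp (-(s^2/2)) := by
    rw [← Real.exp_add]; ring_nf
  rw [hexp]
  have hs2 : s^2 ≤ s := by nlinarith
  have hs3 : s^3 ≤ s^2 := by nlinarith
  have hs4 : s^4 ≤ s^3 := by nlinarith
  have hs5 : (0:ℝ) ≤ s^5 := by positivity
  have hs6 : (0:ℝ) ≤ s^6 := by positivity
  have hP : (0:ℝ) ≤ 1 - s + s^2/2 - s^3/6 - 5*s^4/96 := by nlinarith
  have hQ : (0:ℝ) ≤ 1 - s^2/2 := by nlinarith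
  have key : (1:ℝ) - s ≤ (1 - s + s^2/2 - s^3/6 - 5*s^4/96) * (1 - s^2/2) := by
    nlinarith
  calc (1:ℝ) - s ≤ (1 - s + s^2/2 - s^3/6 - 5*s^4/96) * (1 - s^2/2) := key
    _ ≤ Real.exp (-s) * Real.exp (-(s^2/2)) :=
        mul_le_mul hlow h3 hQ (le_of_lt (Real.exp_pos _))

lemma exp_sub_one_le {x : ℝ} (h0 : 0 < x) (h1 : x < 1) :
    Real.exp x - 1 ≤ x * Real.exp (x/2 + x^2/6) := by
  set t := x/2 with ht
  have ht0 : 0 < t := by positivity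
  have ht1 : t < 1 := by rw [ht]; linarith
  have htabs : |t| ≤ 1 := by rw [abs_of_nonneg ht0.le]; linarith
  have htabs' : |(-t)| ≤ 1 := by rwa [abs_neg]
  have h2 := abs_le.1 (exp_quartic htabs)
  have h3 := abs_le.1 (exp_quartic htabs')
  rw [abs_of_nonneg ht0.le] at h2
  rw [abs_neg, abs_of_nonneg ht0.le] at h3
  -- exp t - exp (-t) ≤ 2t + t^3
  have hdiff : Real.exp t - Real.exp (-t) ≤ 2*t + t^3 := by nlinarith [h2.2, h3.1]
  have hq : 2*t + t^3 ≤ 2*t * Real.exp (x^2/6) := by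
    have := Real.add_one_le_exp (x^2/6)
    have hx2 : x^2/6 = t^2 * (2/3) := by rw [ht]; ring
    nlinarith [Real.add_one_le_exp (x^2/6), sq_nonneg t]
  have hfac : Real.exp x - 1 = Real.exp t * (Real.exp t - Real.exp (-t)) := by
    rw [mul_sub, ← Real.exp_add, ← Real.exp_add]
    norm_num [ht]
  rw [hfac]
  calc Real.exp t * (Real.exp t - Real.exp (-t))
      ≤ Real.exp t * (2*t * Real.exp (x^2/6)) := by
        apply mul_le_mul_of_nonneg_left (le_trans hdiff hq) (Real.exp_pos t).le
    _ = x * Real.exp (x/2 + x^2/6) := by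
        rw [Real.exp_add, ht]; ring

lemma hasDerivAt_F {t : ℝ} (ht : t < 1) :
    HasDerivAt (fun s : ℝ => s + (1-s)*Real.log (1-s) - s^2/2 - s^3/6)
      (-Real.log (1-t) - t - t^2/2) t := by
  have h1 : HasDerivAt (fun s : ℝ => 1 - s) (-1) t := by
    simpa using (hasDerivAt_id t).const_sub 1
  have hne : (1 - t) ≠ 0 := by linarith
  have hlog : HasDerivAt (fun s : ℝ => Real.log (1-s)) (-1 / (1-t)) t := by
    have := (Real.hasDerivAt_log hne).comp t h1
    simpa [Function.comp_def, neg_div] using this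
  have hprod := h1.mul hlog
  have hid : HasDerivAt (fun s : ℝ => s) 1 t := hasDerivAt_id t
  have hsq : HasDerivAt (fun s : ℝ => s^2/2) t t := by
    simpa using (hasDerivAt_pow 2 t).div_const 2
  have hcub : HasDerivAt (fun s : ℝ => s^3/6) (t^2/2) t := by
    have := (hasDerivAt_pow 3 t).div_const 6
    refine this.congr_deriv ?_; push_cast; ring
  have := ((hid.add hprod).sub hsq).sub hcub
  refine this.congr_deriv ?_
  field_simp
  ring

lemma F_nonneg {s : ℝ} (h0 : 0 ≤ s) (h1 : s < 1) :
    s^2/2 + s^3/6 - s ≤ (1-s) * Real.log (1-s) := by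
  set f : ℝ → ℝ := fun s => s + (1-s)*Real.log (1-s) - s^2/2 - s^3/6 with hf
  have key : MonotoneOn f (Set.Icc 0 s) := by
    apply monotoneOn_of_deriv_nonneg (convex_Icc 0 s)
    · intro t htm
      have ht1 : t < 1 := lt_of_le_of_lt htm.2 h1
      exact (hasDerivAt_F ht1).continuousAt.continuousWithinAt
    · intro t htm
      rw [interior_Icc] at htm
      have ht1 : t < 1 := lt_trans htm.2 h1
      exact (hasDerivAt_F ht1).differentiableAt.differentiableWithinAt
    · intro t htm
      rw [interior_Icc] at htm
      have ht1 : t < 1 := lt_trans htm.2 h1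
      rw [(hasDerivAt_F ht1).deriv]
      have := log_one_sub_le (le_of_lt htm.1) ht1
      linarith
  have h00 : (0:ℝ) ∈ Set.Icc (0:ℝ) s := by constructor <;> linarith
  have hss : s ∈ Set.Icc (0:ℝ) s := by constructor <;> linarith
  have := key h00 hss h0
  simp only [hf] at this
  norm_num at this
  linarith

noncomputable def gg (γ θ : ℝ) : ℝ :=
  (1 + (θ-1) * Real.log (1 - 1/θ)) -
    (Real.log (Real.exp (γ/θ) - 1) - Real.log (γ/θ))

lemma dN_eq {γ θ : ℝ} (hγ : 0 < γ) (hθ : 1 < θ) :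
    dN γ θ = (γ - 1 - Real.log γ) + gg γ θ := by
  have hθ0 : (0:ℝ) < θ := by linarith
  have hx : 0 < γ/θ := div_pos hγ hθ0
  have hs : (0:ℝ) < 1 - 1/θ := by
    rw [sub_pos, div_lt_one hθ0]; linarith
  have h1 : Real.log (θ - 1) = Real.log (1 - 1/θ) + Real.log θ := by
    rw [← Real.log_mul (ne_of_gt hs) (ne_of_gt hθ0)]
    congr 1; field_simp
  have hex : (0:ℝ) < Real.exp (γ/θ) - 1 := by
    have := Real.add_one_lt_exp (ne_of_gt hx); linarith
  have h2 : (1:ℝ) - Real.exp (-(γ/θ)) = Real.exp (-(γ/θ)) * (Real.exp (γ/θ) - 1) := by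
    rw [mul_sub, ← Real.exp_add]; simp
  have h3 : Real.log (1 - Real.exp (-(γ/θ))) =
      -(γ/θ) + Real.log (Real.exp (γ/θ) - 1) := by
    rw [h2, Real.log_mul (Real.exp_ne_zero _) (ne_of_gt hex), Real.log_exp]
  have h4 : Real.log (γ/θ) = Real.log γ - Real.log θ := Real.log_div hγ.ne' hθ0.ne'
  have h5 : γ * ((θ-1)/θ) = γ - γ/θ := by field_simp
  rw [dN, gg, h1, h3, h4, h5]
  ring

lemma gg_lb {γ θ : ℝ} (hγ0 : 0 < γ) (hγ1 : γ < 1) (hθ : 1 < θ) :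
    (1/(2*θ) + 1/(6*θ^2)) - (γ/θ/2 + (γ/θ)^2/6) ≤ gg γ θ ∧
    gg γ θ ≤ 1/(2*θ) + 1/(2*θ^2) := by
  have hθ0 : (0:ℝ) < θ := by linarith
  set s : ℝ := 1/θ with hsdef
  have hs0 : 0 < s := by positivity
  have hs1 : s < 1 := by rw [hsdef, div_lt_one hθ0]; linarith
  set x : ℝ := γ/θ with hxdef
  have hx0 : 0 < x := div_pos hγ0 hθ0
  have hx1 : x < 1 := by
    rw [hxdef, div_lt_one hθ0]; linarith
  have hθ1s : θ - 1 = (1-s)/s := by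
    rw [hsdef]; field_simp
  -- bounds on the G part
  have hGlog := F_nonneg hs0.le hs1
  have hGlog' := log_one_sub_le hs0.le hs1
  have hG_lb : s/2 + s^2/6 ≤ 1 + (θ-1) * Real.log (1-s) := by
    rw [hθ1s, div_mul_eq_mul_div, ← sub_le_iff_le_add', le_div_iff₀ hs0]
    nlinarith [hGlog]
  have hG_ub : 1 + (θ-1) * Real.log (1-s) ≤ s/2 + s^2/2 := by
    have hmul : (θ-1) * Real.log (1-s) ≤ (θ-1) * (-s - s^2/2) := by
      apply mul_le_mul_of_nonneg_left hGlog' (by linarith)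
    have : (θ-1) * (-s - s^2/2) = ((1-s)/s) * (-s - s^2/2) := by rw [hθ1s]
    rw [this] at hmul
    have heq : ((1-s)/s) * (-s - s^2/2) = -1 + s/2 + s^2/2 := by
      field_simp; ring
    rw [heq] at hmul
    linarith
  -- bounds on the L part
  have hex : x < Real.exp x - 1 := by
    have := Real.add_one_lt_exp (ne_of_gt hx0); linarith
  have hL_lb : 0 ≤ Real.log (Real.exp x - 1) - Real.log x :=
    sub_nonneg.2 (Real.log_le_log hx0 hex.le)
  have hL_ub : Real.log (Real.exp x - 1) - Real.log x ≤ x/2 + x^2/6 := by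
    have h6 := exp_sub_one_le hx0 hx1
    have h7 : Real.log (Real.exp x - 1) ≤ Real.log (x * Real.exp (x/2 + x^2/6)) :=
      Real.log_le_log (by linarith) h6
    rw [Real.log_mul (ne_of_gt hx0) (Real.exp_ne_zero _), Real.log_exp] at h7
    linarith
  have hss : 1 - 1/θ = 1 - s := by rw [hsdef]
  constructor
  · rw [gg, hss]
    have e1 : 1/(2*θ) = s/2 := by rw [hsdef]; ring
    have e2 : 1/(6*θ^2) = s^2/6 := by rw [hsdef]; ring
    rw [e1, e2]
    have : γ/θ = x := by rw [hxdef]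
    rw [this]
    linarith
  · rw [gg, hss]
    have e1 : 1/(2*θ) = s/2 := by rw [hsdef]; ring
    have e2 : 1/(2*θ^2) = s^2/2 := by rw [hsdef]; ring
    rw [e1, e2]
    have : γ/θ = x := by rw [hxdef]
    rw [this]
    linarith

/-- `d_N(γ,θ) → γ - 1 - log γ` as `θ → ∞`, and `d_N(γ,θ) > γ - 1 - log γ` for all
`θ > 1` (multicast beats unicast). -/
theorem multicast_vs_unicast_diversity (γ : ℝ) (hγ0 : 0 < γ) (hγ1 : γ < 1) :
    Tendsto (fun θ : ℝ => dN γ θ) atTop (nhds (γ - 1 - Real.log γ)) ∧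
    ∀ θ : ℝ, 1 < θ → dN γ θ > γ - 1 - Real.log γ := by
  constructor
  · -- limit
    have hg0 : Tendsto (fun θ : ℝ => gg γ θ) atTop (nhds 0) := by
      have hinv : Tendsto (fun θ : ℝ => θ⁻¹) atTop (nhds 0) := tendsto_inv_atTop_zero
      have hup : Tendsto (fun θ : ℝ => 1/(2*θ) + 1/(2*θ^2)) atTop (nhds 0) := by
        have h1 : Tendsto (fun θ : ℝ => (1/2) * θ⁻¹ + (1/2) * (θ⁻¹ * θ⁻¹)) atTop
            (nhds ((1/2) * 0 + (1/2) * (0 * 0))) :=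
          ((hinv.const_mul (1/2)).add ((hinv.mul hinv).const_mul (1/2)))
        norm_num at h1
        convert h1 using 2 with θ
        ring
      apply tendsto_of_tendsto_of_tendsto_of_le_of_le' tendsto_const_nhds hup
      · filter_upwards [eventually_gt_atTop 1] with θ hθ
        have h := gg_lb hγ0 hγ1 hθ
        have hθ0 : (0:ℝ) < θ := by linarith
        have hdiff : 0 ≤ (1/(2*θ) + 1/(6*θ^2)) - (γ/θ/2 + (γ/θ)^2/6) := by
          have e1 : γ/θ/2 ≤ 1/(2*θ) := by
            rw [show γ/θ/2 = γ/(2*θ) by ring]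
            gcongr

          have e2 : (γ/θ)^2/6 ≤ 1/(6*θ^2) := by
            rw [show (γ/θ)^2/6 = γ^2/(6*θ^2) by ring]
            gcongr
            nlinarith
          linarith
        linarith [h.1]
      · filter_upwards [eventually_gt_atTop 1] with θ hθ
        exact (gg_lb hγ0 hγ1 hθ).2
    have := (tendsto_const_nhds (x := γ - 1 - Real.log γ) (f := atTop (α := ℝ))).add hg0
    rw [add_zero] at this
    apply this.congr'
    filter_upwards [eventually_gt_atTop 1] with θ hθ
    exact (dN_eq hγ0 hθ).symm
  · -- strict inequality
    intro θ hθ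
    have hθ0 : (0:ℝ) < θ := by linarith
    rw [dN_eq hγ0 hθ, gt_iff_lt, lt_add_iff_pos_right]
    have h := (gg_lb hγ0 hγ1 hθ).1
    have e1 : γ/θ/2 < 1/(2*θ) := by
      rw [show γ/θ/2 = γ/(2*θ) by ring]
      gcongr

    have e2 : (γ/θ)^2/6 ≤ 1/(6*θ^2) := by
      rw [show (γ/θ)^2/6 = γ^2/(6*θ^2) by ring]
      gcongr
      nlinarith
    linarith
end
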